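/- Let s > 1/2 and u ∈ H^s_+(𝕋). Then H_{Π(|u|²u)} = T_{|u|²}H_u + H_u T_{|u|²} − H_u³ and K_{Π(|u|²u)} = T_{|u|²}K_u + K_u T_{|u|²} − K_u³ as operators on L²_+(𝕋). -/

import Mathlib

open scoped BigOperators ComplexConjugate

noncomputable section

/-- The Hardy space `L²₊(𝕋)` of the circle, modeled by the Hilbert space `ℓ²(ℕ, ℂ)` of
sequences of nonnegative Fourier (= Taylor) coefficients. -/
abbrev Hardy : Type := lp (fun _ : ℕ => ℂ) 2

/-- The Fourier coefficients of an element of the Hardy space. -/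
def coeffs (f : Hardy) : ℕ → ℂ := fun n => f n

/-- Membership in the Sobolev space `Hˢ₊(𝕋)`, expressed on Fourier coefficients. -/
def InHs (s : ℝ) (u : ℕ → ℂ) : Prop :=
  Summable fun k : ℕ => ((1 : ℝ) + (k : ℝ) ^ 2) ^ s * ‖u k‖ ^ 2

/-- The `Hˢ` norm, expressed on Fourier coefficients. -/
def hsNorm (s : ℝ) (u : ℕ → ℂ) : ℝ :=
  Real.sqrt (∑' k : ℕ, ((1 : ℝ) + (k : ℝ) ^ 2) ^ s * ‖u k‖ ^ 2)

/-- Membership in the Wiener algebra `W`. -/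
def InW (u : ℕ → ℂ) : Prop := Summable fun k : ℕ => ‖u k‖

/-- The Wiener norm `‖u‖_W = Σ |û(k)|`. -/
def wienerNorm (u : ℕ → ℂ) : ℝ := ∑' k : ℕ, ‖u k‖

/-- The `L²` norm, expressed on Fourier coefficients. -/
def l2Norm (u : ℕ → ℂ) : ℝ := Real.sqrt (∑' k : ℕ, ‖u k‖ ^ 2)

/-- The Hankel operator `H_u(h) = Π(u h̄)`, expressed on Fourier coefficients:
`(H_u h)^(n) = Σ_p û(n+p) conj(ĥ(p))`. -/
def hankel (u h : ℕ → ℂ) : ℕ → ℂ := fun n => ∑' p : ℕ, u (n + p) * conj (h p)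

/-- The shifted Hankel operator `K_u = S* H_u`. -/
def shiftedHankel (u h : ℕ → ℂ) : ℕ → ℂ := fun n => hankel u h (n + 1)

/-- Fourier coefficients of the pointwise product `fg` of two holomorphic (Hardy class)
functions: the Cauchy product. -/
def mulCoeff (f g : ℕ → ℂ) : ℕ → ℂ := fun n => ∑ p ∈ Finset.range (n + 1), f p * g (n - p)

/-- Fourier coefficients of `T_{a b̄}(h) = Π(a b̄ h)` for `a, b, h` in the Hardy class. -/
def toeplitzAB (a b h : ℕ → ℂ) : ℕ → ℂ :=
  fun n => ∑' q : ℕ, conj (b q) * mulCoeff a h (n + q)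

/-- Fourier coefficients of `T_{ā}(h) = Π(ā h)` for `a, h` in the Hardy class. -/
def toeplitzConj (a h : ℕ → ℂ) : ℕ → ℂ := fun n => ∑' q : ℕ, conj (a q) * h (n + q)

/-- The Szegő nonlinearity `Π(|u|²u) = T_{u ū}(u)`. -/
def szegoNL (u : ℕ → ℂ) : ℕ → ℂ := toeplitzAB u u u

/-- The operator `B_u = (i/2) H_u² - i T_{|u|²}` of the Lax pair. -/
def laxB (u h : ℕ → ℂ) : ℕ → ℂ := fun n =>
  Complex.I / 2 * hankel u (hankel u h) n - Complex.I * toeplitzAB u u h n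

/-- The operator `C_u = (i/2) K_u² - i T_{|u|²}` of the Lax pair. -/
def laxC (u h : ℕ → ℂ) : ℕ → ℂ := fun n =>
  Complex.I / 2 * shiftedHankel u (shiftedHankel u h) n - Complex.I * toeplitzAB u u h n

/-- `u : ℝ → L²₊` is a (smooth in time, `Hˢ`-valued) solution of the cubic Szegő equation
`i ∂_t u = Π(|u|²u)`. -/
def IsSzegoSolution (s : ℝ) (u : ℝ → Hardy) : Prop :=
  (∀ t, InHs s (coeffs (u t))) ∧ ContDiff ℝ (⊤ : ℕ∞) u ∧
    ∀ t n, HasDerivAt (fun τ : ℝ => coeffs (u τ) n) (-Complex.I * szegoNL (coeffs (u t)) n) t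

/-- The Hankel operator with symbol `u` (composed with complex conjugation, which does not
change its range), as a linear map on finitely supported sequences. -/
def hankelLM (u : ℕ → ℂ) : (ℕ →₀ ℂ) →ₗ[ℂ] (ℕ → ℂ) :=
  Finsupp.lsum ℂ fun p => LinearMap.toSpanSingleton ℂ (ℕ → ℂ) fun n => u (n + p)

/-- The rank of the Hankel operator `H_u`. -/
def hankelRank (u : ℕ → ℂ) : ℕ := Module.finrank ℂ (LinearMap.range (hankelLM u))

/-- The finite rank manifold `𝒱(d)`: `u` with `rk H_u = [(d+1)/2]` and `rk K_u = [d/2]`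
(recall `K_u = H_{S*u}`). -/
def InV (d : ℕ) (u : ℕ → ℂ) : Prop :=
  InHs (1 / 2) u ∧ FiniteDimensional ℂ (LinearMap.range (hankelLM u)) ∧
    hankelRank u = (d + 1) / 2 ∧ hankelRank (fun n => u (n + 1)) = d / 2

/-- `w = w^y = (I + y H_u²)⁻¹(1)`, characterized by `(I + y H_u²) w = 1`. -/
def IsResolventOne (y : ℝ) (u w : ℕ → ℂ) : Prop :=
  Memℓp w 2 ∧ ∀ n, w n + (y : ℂ) * hankel u (hankel u w) n = if n = 0 then 1 else 0

/-- The Hamiltonian vector field `X_{J^y}(u) = 2iy w^y H_u(w^y)` (a pointwise product of two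
Hardy class functions), expressed on Fourier coefficients; `w` stands for `w^y`. -/
def XJ (y : ℝ) (u w : ℕ → ℂ) : ℕ → ℂ :=
  fun n => 2 * Complex.I * (y : ℂ) * mulCoeff w (hankel u w) n

/-- The operator `G_u^y(h) = -y w^y Π(conj(w^y) h) + y² (H_u w^y) Π(conj(H_u w^y) h)`;
`w` stands for `w^y`. -/
def Gop (y : ℝ) (u w h : ℕ → ℂ) : ℕ → ℂ := fun n =>
  -(y : ℂ) * mulCoeff w (toeplitzConj w h) n
    + (y : ℂ) ^ 2 * mulCoeff (hankel u w) (toeplitzConj (hankel u w) h) n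

/-- The operator `F_u^y(h) = G_u^y(h) - y² (h | H_u w^y) H_u w^y`; `w` stands for `w^y`. -/
def Fop (y : ℝ) (u w h : ℕ → ℂ) : ℕ → ℂ := fun n =>
  Gop y u w h n - (y : ℂ) ^ 2 * (∑' p : ℕ, h p * conj (hankel u w p)) * hankel u w n

/-! ### Auxiliary lemmas for `statement4` -/

private lemma sqrt_mul_le_half {a b : ℝ} (ha : 0 ≤ a) (hb : 0 ≤ b) :
    Real.sqrt (a * b) ≤ (a + b) / 2 := by
  rw [show (a + b) / 2 = Real.sqrt (((a + b) / 2) ^ 2) from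
    (Real.sqrt_sq (by positivity)).symm]
  apply Real.sqrt_le_sqrt
  nlinarith [sq_nonneg (a - b)]

private lemma summable_norm_of_inHs {s : ℝ} (hs : 1 / 2 < s) {u : ℕ → ℂ}
    (hu : InHs s u) : Summable fun k : ℕ => ‖u k‖ := by
  have hspos : (0 : ℝ) < s := by linarith
  have hts : Summable fun k : ℕ => ((1 : ℝ) + (k : ℝ) ^ 2) ^ (-s) := by
    rw [← summable_nat_add_iff 1]
    have hbase : Summable fun k : ℕ => (((k : ℝ) + 1) ^ (2 * s))⁻¹ := by
      have h1 := (summable_nat_add_iff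
        (f := fun n : ℕ => (((n : ℝ)) ^ (2 * s))⁻¹) 1).2
        (Real.summable_nat_rpow_inv.2 (by linarith))
      simpa using h1
    apply Summable.of_nonneg_of_le (fun k => by positivity) _ hbase
    intro k
    have hk1 : (0 : ℝ) < (k : ℝ) + 1 := by positivity
    have hcast : ((k + 1 : ℕ) : ℝ) = (k : ℝ) + 1 := by push_cast; ring
    rw [hcast]
    have h2 : ((k : ℝ) + 1) ^ (2 * s) = (((k : ℝ) + 1) ^ (2 : ℕ)) ^ s := by
      rw [← Real.rpow_natCast ((k : ℝ) + 1) 2, ← Real.rpow_mul hk1.le]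
      norm_num
    have h3 : (((k : ℝ) + 1) ^ (2 : ℕ)) ^ s ≤ ((1 : ℝ) + ((k : ℝ) + 1) ^ 2) ^ s := by
      apply Real.rpow_le_rpow (by positivity) (by nlinarith) hspos.le
    rw [Real.rpow_neg (by positivity)]
    rw [h2]
    exact inv_anti₀ (by positivity) h3
  have hbound : ∀ k : ℕ, ‖u k‖ ≤
      (((1 : ℝ) + (k : ℝ) ^ 2) ^ s * ‖u k‖ ^ 2 + ((1 : ℝ) + (k : ℝ) ^ 2) ^ (-s)) / 2 := by
    intro k
    have hx : (0 : ℝ) < (1 : ℝ) + (k : ℝ) ^ 2 := by positivity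
    have key : (((1 : ℝ) + (k : ℝ) ^ 2) ^ s * ‖u k‖ ^ 2) * ((1 : ℝ) + (k : ℝ) ^ 2) ^ (-s)
        = ‖u k‖ ^ 2 := by
      rw [mul_comm (((1 : ℝ) + (k : ℝ) ^ 2) ^ s) (‖u k‖ ^ 2), mul_assoc,
        ← Real.rpow_add hx]
      simp
    have : ‖u k‖ = Real.sqrt ((((1 : ℝ) + (k : ℝ) ^ 2) ^ s * ‖u k‖ ^ 2) *
        ((1 : ℝ) + (k : ℝ) ^ 2) ^ (-s)) := by
      rw [key, Real.sqrt_sq (norm_nonneg _)]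
    refine le_trans (le_of_eq this) (sqrt_mul_le_half (by positivity) (by positivity))
  exact Summable.of_nonneg_of_le (fun k => norm_nonneg _) hbound ((hu.add hts).div_const 2)

private lemma tsum_bij {α β : Type*} {f : α → ℂ} {g : β → ℂ}
    (hf : Summable f) (i : α → β) (j : β → α)
    (h1 : ∀ a, f a ≠ 0 → g (i a) = f a)
    (h2 : ∀ b, g b ≠ 0 → f (j b) = g b)
    (h3 : ∀ a, f a ≠ 0 → j (i a) = a)
    (h4 : ∀ b, g b ≠ 0 → i (j b) = b) :
    Summable g ∧ ∑' b, g b = ∑' a, f a := by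
  have hiff : ∀ a₀ : ℂ, HasSum f a₀ ↔ HasSum g a₀ := fun a₀ =>
    hasSum_iff_hasSum_of_ne_zero_bij (fun b : Function.support g => j b)
      (fun b₁ b₂ hb => Subtype.ext (by
        have hb' : j (b₁ : β) = j (b₂ : β) := hb
        rw [← h4 b₁ b₁.2, ← h4 b₂ b₂.2, hb']))
      (fun a ha => ⟨⟨i a, by
        rw [Function.mem_support, h1 a ha]; exact ha⟩, h3 a ha⟩)
      (fun b => h2 b b.2)
  have hg : HasSum g (∑' a, f a) := (hiff _).1 hf.hasSum
  exact ⟨hg.summable, hg.tsum_eq⟩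

/-- The common value function, in coordinates `(Q, A, B)` (conjugate `u`-index, two plain
`u`-indices); the `h`-index is `A + B - m - Q`. -/
private def Vfun (u h : ℕ → ℂ) (m : ℕ) : ℕ × ℕ × ℕ → ℂ := fun x =>
  conj (h (x.2.1 + x.2.2 - m - x.1)) * (conj (u x.1) * (u x.2.1 * u x.2.2))

private def F0 (u h : ℕ → ℂ) (m : ℕ) : ℕ × ℕ × ℕ → ℂ := fun x =>
  if m + x.1 ≤ x.2.1 + x.2.2 then Vfun u h m x else 0

private def F1 (u h : ℕ → ℂ) (m n : ℕ) : ℕ × ℕ × ℕ → ℂ := fun x =>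
  if m + x.1 ≤ x.2.1 + x.2.2 ∧ x.2.1 ≤ n + x.1 then Vfun u h m x else 0

private def F2 (u h : ℕ → ℂ) (m : ℕ) : ℕ × ℕ × ℕ → ℂ := fun x =>
  if m + x.1 ≤ x.2.1 + x.2.2 ∧ m ≤ x.2.1 then Vfun u h m x else 0

private def F3 (u h : ℕ → ℂ) (m n : ℕ) : ℕ × ℕ × ℕ → ℂ := fun x =>
  if m + x.1 ≤ x.2.1 + x.2.2 ∧ x.2.1 ≤ n + x.1 ∧ m ≤ x.2.1 then Vfun u h m x else 0

private lemma summable_cond (u h : ℕ → ℂ) (hu1 : Summable fun k => ‖u k‖) {Ch : ℝ}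
    (hCb : ∀ k, ‖h k‖ ≤ Ch) (m : ℕ) {G : ℕ × ℕ × ℕ → ℂ}
    (hG : ∀ x, G x = 0 ∨ G x = Vfun u h m x) : Summable G := by
  have hCh0 : (0 : ℝ) ≤ Ch := le_trans (norm_nonneg _) (hCb 0)
  have hD : Summable (fun x : ℕ × ℕ × ℕ => Ch * (‖u x.1‖ * (‖u x.2.1‖ * ‖u x.2.2‖))) := by
    have hin : Summable (fun y : ℕ × ℕ => ‖u y.1‖ * ‖u y.2‖) := by
      have := Summable.mul_of_nonneg (f := fun k : ℕ => ‖u k‖)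
        (g := fun k : ℕ => ‖u k‖) hu1 hu1
        (fun _ => norm_nonneg _) (fun _ => norm_nonneg _)
      exact this
    have hout : Summable (fun x : ℕ × ℕ × ℕ => ‖u x.1‖ * (‖u x.2.1‖ * ‖u x.2.2‖)) := by
      have := Summable.mul_of_nonneg (f := fun k : ℕ => ‖u k‖)
        (g := fun y : ℕ × ℕ => ‖u y.1‖ * ‖u y.2‖) hu1 hin
        (fun _ => norm_nonneg _)
        (fun y => mul_nonneg (norm_nonneg _) (norm_nonneg _))
      exact this
    exact hout.mul_left Ch
  apply Summable.of_norm_bounded hD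
  intro x
  rcases hG x with hx | hx
  · rw [hx]; simp; positivity
  · rw [hx]
    have : ‖Vfun u h m x‖ = ‖h (x.2.1 + x.2.2 - m - x.1)‖ *
        (‖u x.1‖ * (‖u x.2.1‖ * ‖u x.2.2‖)) := by
      simp [Vfun, norm_mul]
    rw [this]
    exact mul_le_mul_of_nonneg_right (hCb _) (by positivity)
private lemma szego_key (u h : ℕ → ℂ) (hu1 : Summable fun k => ‖u k‖) {Ch : ℝ}
    (hCb : ∀ k, ‖h k‖ ≤ Ch) (n t : ℕ) (ht : t ≤ 1) :
    hankel (szegoNL u) h (n + t)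
      = toeplitzAB u u (fun k => hankel u h (k + t)) n
        + hankel u (toeplitzAB u u h) (n + t)
        - hankel u (fun k => hankel u (fun k' => hankel u h (k' + t)) (k + t)) (n + t) := by
  set m := n + t with hm
  have hS0 : Summable (F0 u h m) :=
    summable_cond u h hu1 hCb m (fun x => by
      unfold F0; split; exacts [Or.inr rfl, Or.inl rfl])
  have hS1 : Summable (F1 u h m n) :=
    summable_cond u h hu1 hCb m (fun x => by
      unfold F1; split; exacts [Or.inr rfl, Or.inl rfl])
  have hS2 : Summable (F2 u h m) :=
    summable_cond u h hu1 hCb m (fun x => by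
      unfold F2; split; exacts [Or.inr rfl, Or.inl rfl])
  have hS3 : Summable (F3 u h m n) :=
    summable_cond u h hu1 hCb m (fun x => by
      unfold F3; split; exacts [Or.inr rfl, Or.inl rfl])
  -- pointwise inclusion-exclusion
  have hpt : ∀ x, F0 u h m x = F1 u h m n x + F2 u h m x - F3 u h m n x := by
    rintro ⟨Q, A, B⟩
    simp only [F0, F1, F2, F3]
    by_cases hr : m + Q ≤ A + B
    · by_cases hc1 : A ≤ n + Q
      · by_cases hc2 : m ≤ A
        · rw [if_pos hr, if_pos (show m + Q ≤ A + B ∧ A ≤ n + Q from ⟨hr, hc1⟩),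
            if_pos (show m + Q ≤ A + B ∧ m ≤ A from ⟨hr, hc2⟩),
            if_pos (show m + Q ≤ A + B ∧ A ≤ n + Q ∧ m ≤ A from ⟨hr, hc1, hc2⟩)]; ring
        · rw [if_pos hr, if_pos (show m + Q ≤ A + B ∧ A ≤ n + Q from ⟨hr, hc1⟩),
            if_neg (fun hc : m + Q ≤ A + B ∧ m ≤ A => hc2 hc.2),
            if_neg (fun hc : m + Q ≤ A + B ∧ A ≤ n + Q ∧ m ≤ A => hc2 hc.2.2)]; ring
      · have hc2 : m ≤ A := by omega
        rw [if_pos hr, if_neg (fun hc : m + Q ≤ A + B ∧ A ≤ n + Q => hc1 hc.2),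
          if_pos (show m + Q ≤ A + B ∧ m ≤ A from ⟨hr, hc2⟩),
          if_neg (fun hc : m + Q ≤ A + B ∧ A ≤ n + Q ∧ m ≤ A => hc1 hc.2.1)]; ring
    · rw [if_neg hr, if_neg (fun hc : m + Q ≤ A + B ∧ A ≤ n + Q => hr hc.1),
        if_neg (fun hc : m + Q ≤ A + B ∧ m ≤ A => hr hc.1),
        if_neg (fun hc : m + Q ≤ A + B ∧ A ≤ n + Q ∧ m ≤ A => hr hc.1)]; ring
  -- Claim 0 : the left-hand side
  have CL : ∑' x, F0 u h m x = hankel (szegoNL u) h m := by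
    set g : ℕ × ℕ × ℕ → ℂ := fun y =>
      conj (h y.1) * (conj (u y.2.1) *
        (if y.2.2 ≤ m + y.1 + y.2.1 then u y.2.2 * u (m + y.1 + y.2.1 - y.2.2) else 0))
      with hgdef
    obtain ⟨hgS, hgt⟩ := tsum_bij (g := g) hS0
      (fun x => (x.2.1 + x.2.2 - m - x.1, x.1, x.2.1))
      (fun y => (y.2.1, y.2.2, m + y.1 + y.2.1 - y.2.2))
      (by
        rintro ⟨Q, A, B⟩ hx
        simp only [F0, Vfun] at hx ⊢
        have hr : m + Q ≤ A + B := by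
          by_contra hc; rw [if_neg hc] at hx; exact hx rfl
        simp only [hgdef]
        rw [if_pos hr, if_pos (show A ≤ m + (A + B - m - Q) + Q by omega),
          show m + (A + B - m - Q) + Q - A = B by omega])
      (by
        rintro ⟨P, q, a⟩ hx
        simp only [hgdef] at hx
        have hg : a ≤ m + P + q := by
          by_contra hc; rw [if_neg hc] at hx; simp at hx
        simp only [hgdef, F0, Vfun]
        rw [if_pos (show m + q ≤ a + (m + P + q - a) by omega),
          show a + (m + P + q - a) - m - q = P by omega, if_pos hg])
      (by
        rintro ⟨Q, A, B⟩ hx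
        simp only [F0, Vfun] at hx
        have hr : m + Q ≤ A + B := by
          by_contra hc; rw [if_neg hc] at hx; exact hx rfl
        simp only [Prod.mk.injEq, true_and, and_true]; omega)
      (by
        rintro ⟨P, q, a⟩ hx
        simp only [hgdef] at hx
        have hg : a ≤ m + P + q := by
          by_contra hc; rw [if_neg hc] at hx; simp at hx
        simp only [Prod.mk.injEq, true_and, and_true]; omega)
    simp only [hankel]
    rw [← hgt, hgS.tsum_prod]
    apply tsum_congr; intro P
    rcases eq_or_ne (h P) 0 with hP | hP
    · simp only [hgdef]
      rw [tsum_mul_left]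
      simp [hP]
    · have hw : Summable (fun c : ℕ × ℕ => conj (u c.1) *
          (if c.2 ≤ m + P + c.1 then u c.2 * u (m + P + c.1 - c.2) else 0)) := by
        have hsl := hgS.prod_factor P
        simp only [hgdef] at hsl
        exact (summable_mul_left_iff (by simp [hP])).1 hsl
      simp only [hgdef]
      rw [tsum_mul_left, mul_comm (conj (h P))]
      congr 1
      rw [hw.tsum_prod]
      simp only [szegoNL, toeplitzAB]
      apply tsum_congr; intro q
      rw [tsum_mul_left]
      congr 1
      rw [show mulCoeff u u (m + P + q)
          = ∑ a ∈ Finset.range (m + P + q + 1), u a * u (m + P + q - a) from rfl]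
      rw [tsum_eq_sum (s := Finset.range (m + P + q + 1))
        (fun b hb => if_neg (fun hc => hb (Finset.mem_range.2 (by omega))))]
      exact Finset.sum_congr rfl fun a ha =>
        if_pos (by have := Finset.mem_range.1 ha; omega)
  -- Claim 1 : T_{|u|²} H_u
  have C1 : ∑' x, F1 u h m n x = toeplitzAB u u (fun k => hankel u h (k + t)) n := by
    set g : ℕ × ℕ × ℕ → ℂ := fun y =>
      conj (u y.1) * (if y.2.1 ≤ n + y.1 then
        u y.2.1 * (u (n + y.1 - y.2.1 + t + y.2.2) * conj (h y.2.2)) else 0)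
      with hgdef
    obtain ⟨hgS, hgt⟩ := tsum_bij (g := g) hS1
      (fun x => (x.1, x.2.1, x.2.1 + x.2.2 - m - x.1))
      (fun y => (y.1, y.2.1, n + y.1 - y.2.1 + t + y.2.2))
      (by
        rintro ⟨Q, A, B⟩ hx
        simp only [F1, Vfun] at hx ⊢
        have hr : m + Q ≤ A + B ∧ A ≤ n + Q := by
          by_contra hc; rw [if_neg hc] at hx; exact hx rfl
        obtain ⟨hr1, hr2⟩ := hr
        simp only [hgdef]
        rw [if_pos (show m + Q ≤ A + B ∧ A ≤ n + Q from ⟨hr1, hr2⟩), if_pos hr2,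
          show n + Q - A + t + (A + B - m - Q) = B by omega]
        ring)
      (by
        rintro ⟨q, a, P⟩ hx
        simp only [hgdef] at hx
        have hg : a ≤ n + q := by
          by_contra hc; rw [if_neg hc] at hx; simp at hx
        simp only [hgdef, F1, Vfun]
        rw [if_pos (show m + q ≤ a + (n + q - a + t + P) ∧ a ≤ n + q from ⟨by omega, hg⟩),
          show a + (n + q - a + t + P) - m - q = P by omega, if_pos hg]
        ring)
      (by
        rintro ⟨Q, A, B⟩ hx
        simp only [F1, Vfun] at hx
        have hr : m + Q ≤ A + B ∧ A ≤ n + Q := by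
          by_contra hc; rw [if_neg hc] at hx; exact hx rfl
        obtain ⟨hr1, hr2⟩ := hr
        simp only [Prod.mk.injEq, true_and, and_true]; omega)
      (by
        rintro ⟨q, a, P⟩ hx
        simp only [hgdef] at hx
        have hg : a ≤ n + q := by
          by_contra hc; rw [if_neg hc] at hx; simp at hx
        simp only [Prod.mk.injEq, true_and, and_true]; omega)
    simp only [toeplitzAB]
    rw [← hgt, hgS.tsum_prod]
    apply tsum_congr; intro q
    rcases eq_or_ne (u q) 0 with hq | hq
    · simp only [hgdef]
      rw [tsum_mul_left]
      simp [hq]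
    · have hw : Summable (fun c : ℕ × ℕ => if c.1 ≤ n + q then
          u c.1 * (u (n + q - c.1 + t + c.2) * conj (h c.2)) else 0) := by
        have hsl := hgS.prod_factor q
        simp only [hgdef] at hsl
        exact (summable_mul_left_iff (by simp [hq])).1 hsl
      simp only [hgdef]
      rw [tsum_mul_left]
      congr 1
      rw [hw.tsum_prod]
      have hstep : ∀ a : ℕ, (∑' P : ℕ, if a ≤ n + q then
          u a * (u (n + q - a + t + P) * conj (h P)) else 0)
          = if a ≤ n + q then u a * hankel u h (n + q - a + t) else 0 := by
        intro a
        by_cases ha : a ≤ n + q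
        · simp only [if_pos ha]
          rw [tsum_mul_left]
          rfl
        · simp [ha]
      rw [tsum_congr hstep]
      rw [show mulCoeff u (fun k => hankel u h (k + t)) (n + q)
          = ∑ a ∈ Finset.range (n + q + 1), u a * hankel u h (n + q - a + t) from rfl]
      rw [tsum_eq_sum (s := Finset.range (n + q + 1))
        (fun b hb => if_neg (fun hc => hb (Finset.mem_range.2 (by omega))))]
      exact Finset.sum_congr rfl fun a ha =>
        if_pos (by have := Finset.mem_range.1 ha; omega)
  -- Claim 2 : H_u T_{|u|²}
  have C2 : ∑' x, F2 u h m x = hankel u (toeplitzAB u u h) m := by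
    set g : ℕ × ℕ × ℕ → ℂ := fun y =>
      u (m + y.1) * (u y.2.1 * (if y.2.2 ≤ y.1 + y.2.1 then
        conj (u y.2.2) * conj (h (y.1 + y.2.1 - y.2.2)) else 0))
      with hgdef
    obtain ⟨hgS, hgt⟩ := tsum_bij (g := g) hS2
      (fun x => (x.2.1 - m, x.2.2, x.1))
      (fun y => (y.2.2, m + y.1, y.2.1))
      (by
        rintro ⟨Q, A, B⟩ hx
        simp only [F2, Vfun] at hx ⊢
        have hr : m + Q ≤ A + B ∧ m ≤ A := by
          by_contra hc; rw [if_neg hc] at hx; exact hx rfl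
        obtain ⟨hr1, hr2⟩ := hr
        simp only [hgdef]
        rw [if_pos (show m + Q ≤ A + B ∧ m ≤ A from ⟨hr1, hr2⟩), show m + (A - m) = A by omega,
          if_pos (show Q ≤ A - m + B by omega),
          show A - m + B - Q = A + B - m - Q by omega]
        ring)
      (by
        rintro ⟨p, q, a⟩ hx
        simp only [hgdef] at hx
        have hg : a ≤ p + q := by
          by_contra hc; rw [if_neg hc] at hx; simp at hx
        simp only [hgdef, F2, Vfun]
        rw [if_pos (show m + a ≤ m + p + q ∧ m ≤ m + p from ⟨by omega, by omega⟩),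
          show m + p + q - m - a = p + q - a by omega, if_pos hg]
        ring)
      (by
        rintro ⟨Q, A, B⟩ hx
        simp only [F2, Vfun] at hx
        have hr : m + Q ≤ A + B ∧ m ≤ A := by
          by_contra hc; rw [if_neg hc] at hx; exact hx rfl
        obtain ⟨hr1, hr2⟩ := hr
        simp only [Prod.mk.injEq, true_and, and_true]; omega)
      (by
        rintro ⟨p, q, a⟩ hx
        simp only [Prod.mk.injEq, true_and, and_true]; omega)
    simp only [hankel]
    rw [← hgt, hgS.tsum_prod]
    apply tsum_congr; intro p
    rcases eq_or_ne (u (m + p)) 0 with hp | hp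
    · simp only [hgdef]
      rw [tsum_mul_left]
      simp [hp]
    · have hw : Summable (fun c : ℕ × ℕ => u c.1 * (if c.2 ≤ p + c.1 then
          conj (u c.2) * conj (h (p + c.1 - c.2)) else 0)) := by
        have hsl := hgS.prod_factor p
        simp only [hgdef] at hsl
        exact (summable_mul_left_iff hp).1 hsl
      simp only [hgdef]
      rw [tsum_mul_left]
      congr 1
      have hconj : conj (toeplitzAB u u h p)
          = ∑' q : ℕ, u q * conj (mulCoeff u h (p + q)) := by
        simp only [toeplitzAB]
        rw [show (conj (∑' q : ℕ, conj (u q) * mulCoeff u h (p + q)) : ℂ)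
            = star (∑' q : ℕ, conj (u q) * mulCoeff u h (p + q)) from rfl, tsum_star]
        apply tsum_congr; intro q
        rw [star_mul']
        simp [RCLike.star_def]
      rw [hconj, hw.tsum_prod]
      apply tsum_congr; intro q
      show (∑' a : ℕ, u q * (if a ≤ p + q then
          conj (u a) * conj (h (p + q - a)) else 0))
        = u q * conj (mulCoeff u h (p + q))
      rw [tsum_mul_left]
      congr 1
      rw [show conj (mulCoeff u h (p + q))
          = ∑ a ∈ Finset.range (p + q + 1), conj (u a) * conj (h (p + q - a)) from by
        simp [mulCoeff, map_sum]]
      rw [tsum_eq_sum (s := Finset.range (p + q + 1))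
        (fun b hb => if_neg (fun hc => hb (Finset.mem_range.2 (by omega))))]
      exact Finset.sum_congr rfl fun a ha =>
        if_pos (by have := Finset.mem_range.1 ha; omega)
  -- Claim 3 : H_u³
  have C3 : ∑' x, F3 u h m n x
      = hankel u (fun k => hankel u (fun k' => hankel u h (k' + t)) (k + t)) m := by
    set g : ℕ × ℕ × ℕ → ℂ := fun y =>
      u (m + y.1) * (conj (u (y.1 + t + y.2.1)) *
        (u (y.2.1 + t + y.2.2) * conj (h y.2.2)))
      with hgdef
    obtain ⟨hgS, hgt⟩ := tsum_bij (g := g) hS3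
      (fun x => (x.2.1 - m, n + x.1 - x.2.1, x.2.1 + x.2.2 - m - x.1))
      (fun y => (y.1 + t + y.2.1, m + y.1, y.2.1 + t + y.2.2))
      (by
        rintro ⟨Q, A, B⟩ hx
        simp only [F3, Vfun] at hx ⊢
        have hr : m + Q ≤ A + B ∧ A ≤ n + Q ∧ m ≤ A := by
          by_contra hc; rw [if_neg hc] at hx; exact hx rfl
        obtain ⟨hr1, hr2, hr3⟩ := hr
        simp only [hgdef]
        rw [if_pos (show m + Q ≤ A + B ∧ A ≤ n + Q ∧ m ≤ A from ⟨hr1, hr2, hr3⟩),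
          show m + (A - m) = A by omega,
          show A - m + t + (n + Q - A) = Q by omega,
          show n + Q - A + t + (A + B - m - Q) = B by omega]
        ring)
      (by
        rintro ⟨p, s, r⟩ hx
        simp only [hgdef, F3, Vfun]
        rw [if_pos (show m + (p + t + s) ≤ m + p + (s + t + r)
              ∧ m + p ≤ n + (p + t + s) ∧ m ≤ m + p from ⟨by omega, by omega, by omega⟩),
          show m + p + (s + t + r) - m - (p + t + s) = r by omega]
        ring)
      (by
        rintro ⟨Q, A, B⟩ hx
        simp only [F3, Vfun] at hx
        have hr : m + Q ≤ A + B ∧ A ≤ n + Q ∧ m ≤ A := by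
          by_contra hc; rw [if_neg hc] at hx; exact hx rfl
        obtain ⟨hr1, hr2, hr3⟩ := hr
        simp only [Prod.mk.injEq, true_and, and_true]; omega)
      (by
        rintro ⟨p, s, r⟩ hx
        simp only [Prod.mk.injEq, true_and, and_true]; omega)
    simp only [hankel]
    rw [← hgt, hgS.tsum_prod]
    apply tsum_congr; intro p
    rcases eq_or_ne (u (m + p)) 0 with hp | hp
    · simp only [hgdef]
      rw [tsum_mul_left]
      simp [hp]
    · have hw : Summable (fun c : ℕ × ℕ => conj (u (p + t + c.1)) *
          (u (c.1 + t + c.2) * conj (h c.2))) := by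
        have hsl := hgS.prod_factor p
        simp only [hgdef] at hsl
        exact (summable_mul_left_iff hp).1 hsl
      simp only [hgdef]
      rw [tsum_mul_left]
      congr 1
      rw [show (conj (∑' s : ℕ, u (p + t + s) *
            conj (∑' r : ℕ, u (s + t + r) * conj (h r))) : ℂ)
          = star (∑' s : ℕ, u (p + t + s) *
            conj (∑' r : ℕ, u (s + t + r) * conj (h r))) from rfl, tsum_star]
      rw [hw.tsum_prod]
      apply tsum_congr; intro s
      show (∑' r : ℕ, conj (u (p + t + s)) * (u (s + t + r) * conj (h r)))
        = star (u (p + t + s) * conj (∑' r : ℕ, u (s + t + r) * conj (h r)))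
      rw [tsum_mul_left, star_mul']
      simp [RCLike.star_def]
  calc hankel (szegoNL u) h m
      = ∑' x, F0 u h m x := CL.symm
    _ = (∑' x, F1 u h m n x) + (∑' x, F2 u h m x) - ∑' x, F3 u h m n x := by
        rw [tsum_congr hpt, Summable.tsum_sub (hS1.add hS2) hS3, Summable.tsum_add hS1 hS2]
    _ = _ := by rw [C1, C2, C3]

/-- **Identities (2.2) and (2.5)**: `H_{Π(|u|²u)} = T_{|u|²}H_u + H_u T_{|u|²} - H_u³` and
`K_{Π(|u|²u)} = T_{|u|²}K_u + K_u T_{|u|²} - K_u³`. -/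
theorem statement4 (s : ℝ) (hs : 1 / 2 < s) (u : ℕ → ℂ) (hu : InHs s u)
    (h : ℕ → ℂ) (hh : Memℓp h 2) (n : ℕ) :
    hankel (szegoNL u) h n
      = toeplitzAB u u (hankel u h) n + hankel u (toeplitzAB u u h) n
        - hankel u (hankel u (hankel u h)) n ∧
    shiftedHankel (szegoNL u) h n
      = toeplitzAB u u (shiftedHankel u h) n + shiftedHankel u (toeplitzAB u u h) n
        - shiftedHankel u (shiftedHankel u (shiftedHankel u h)) n := by
  have hu1 : Summable fun k : ℕ => ‖u k‖ := summable_norm_of_inHs hs hu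
  have hh2 : Summable fun k : ℕ => ‖h k‖ ^ (2 : ℝ) := by
    have := Memℓp.summable (by norm_num) hh
    simpa using this
  have hCb : ∀ k, ‖h k‖ ≤ Real.sqrt (∑' j : ℕ, ‖h j‖ ^ (2 : ℝ)) := by
    intro k
    have h1 : ‖h k‖ ^ (2 : ℝ) ≤ ∑' j : ℕ, ‖h j‖ ^ (2 : ℝ) :=
      Summable.le_tsum hh2 k (fun j _ => by positivity)
    have h2 : ‖h k‖ = Real.sqrt (‖h k‖ ^ (2 : ℝ)) := by
      rw [show ‖h k‖ ^ (2 : ℝ) = ‖h k‖ ^ (2 : ℕ) from by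
          rw [← Real.rpow_natCast]; norm_num,
        Real.sqrt_sq (norm_nonneg _)]
    rw [h2]
    exact Real.sqrt_le_sqrt h1
  constructor
  · exact szego_key u h hu1 hCb n 0 (by omega)
  · exact szego_key u h hu1 hCb n 1 (by omega)

end
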